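/- arXiv:1407.3372 — 4 statements merged into one kernel-verified Lean document; each statement's English description precedes it below -/
import Mathlib

section
/- Suppose there exist a supermartingale consistent price system (Ŝ, Q) and a submartingale consistent price system (Š, Q) under the same equivalent probability measure Q. Define R̃_T = {(Ĥ·Ŝ)_T + (Ȟ·Š)_T : Ĥ ∈ 𝒫_T^+, Ȟ ∈ 𝒫_T^-}, where (H·S)_T = Σ_{j=1}^T H_j·(S_j − S_{j−1}). Then R̃_T ∩ L^0_+ = {0}, and the market satisfies no arbitrage, i.e. 𝒜_T ∩ L^0_+ = {0}. -/
open MeasureTheory Filter Finset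
open scoped ENNReal NNReal

noncomputable section

namespace BidAskFTAP

variable {Ω : Type*}

/-- Componentwise positive part of a vector in `ℝ^d`. -/
def posPart {d : ℕ} (x : Fin d → ℝ) : Fin d → ℝ := fun i => max (x i) 0

/-- Componentwise negative part of a vector in `ℝ^d`. -/
def negPart {d : ℕ} (x : Fin d → ℝ) : Fin d → ℝ := fun i => max (-(x i)) 0

/-- Inner product on `ℝ^d`. -/
def dotp {d : ℕ} (x y : Fin d → ℝ) : ℝ := ∑ i, x i * y i

section Market

variable [m : MeasurableSpace Ω] {d : ℕ}

/-- `F` is a filtration on `(Ω, m)` with horizon `T`: monotone, sub-σ-algebras of `m`,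
and `F T = m` (i.e. `𝓕_T = 𝓕`). -/
def IsFiltration (F : ℕ → MeasurableSpace Ω) (T : ℕ) : Prop :=
  Monotone F ∧ (∀ t, F t ≤ m) ∧ F T = m

/-- Adaptedness of an `ℝ^d`-valued process up to time `T`. -/
def AdaptedProc (F : ℕ → MeasurableSpace Ω) (T : ℕ) (S : ℕ → Ω → Fin d → ℝ) : Prop :=
  ∀ t ≤ T, Measurable[F t] (S t)

/-- Standing assumptions on the bid and ask price processes `S̲ = Sb`, `S̄ = Sa`:
adapted, strictly positive components, and `S̲ ≤ S̄` a.s. -/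
def IsBidAsk (P : Measure Ω) (F : ℕ → MeasurableSpace Ω) (T : ℕ)
    (Sb Sa : ℕ → Ω → Fin d → ℝ) : Prop :=
  AdaptedProc F T Sb ∧ AdaptedProc F T Sa ∧
  (∀ t ≤ T, ∀ i, ∀ᵐ ω ∂P, 0 < Sb t ω i) ∧
  (∀ t ≤ T, ∀ i, ∀ᵐ ω ∂P, 0 < Sa t ω i) ∧
  (∀ t ≤ T, ∀ i, ∀ᵐ ω ∂P, Sb t ω i ≤ Sa t ω i)

/-- A trading strategy on horizon `T`: predictable (`H t` is `𝓕_{t-1}`-measurable),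
with the convention `H 0 = 0` (so that `ΔH 1 = H 1`). -/
def IsStrategy (F : ℕ → MeasurableSpace Ω) (T : ℕ) (H : ℕ → Ω → Fin d → ℝ) : Prop :=
  H 0 = 0 ∧ ∀ t, 1 ≤ t → t ≤ T → Measurable[F (t - 1)] (H t)

/-- Membership in `𝒫_T^+`: componentwise nonnegative. -/
def NonnegStrategy (T : ℕ) (H : ℕ → Ω → Fin d → ℝ) : Prop :=
  ∀ t ≤ T, ∀ ω, ∀ i, 0 ≤ H t ω i

/-- Membership in `𝒫_T^-`: componentwise nonpositive. -/
def NonposStrategy (T : ℕ) (H : ℕ → Ω → Fin d → ℝ) : Prop :=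
  ∀ t ≤ T, ∀ ω, ∀ i, H t ω i ≤ 0

/-- Uniformly bounded strategy. -/
def BoundedStrategy (T : ℕ) (H : ℕ → Ω → Fin d → ℝ) : Prop :=
  ∃ C : ℝ, ∀ t ≤ T, ∀ ω, ∀ i, |H t ω i| ≤ C

/-- The immediate–liquidation value process
`x_T(H) = -∑_{j=1}^T (ΔH_j)⁺·S̄_{j-1} + ∑_{j=1}^T (ΔH_j)⁻·S̲_{j-1} + (H_T)⁺·S̲_T - (H_T)⁻·S̄_T`. -/
def xval (Sb Sa : ℕ → Ω → Fin d → ℝ) (T : ℕ) (H : ℕ → Ω → Fin d → ℝ) (ω : Ω) : ℝ :=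
  (∑ j ∈ Icc 1 T, (dotp (negPart (H j ω - H (j - 1) ω)) (Sb (j - 1) ω)
    - dotp (posPart (H j ω - H (j - 1) ω)) (Sa (j - 1) ω)))
  + dotp (posPart (H T ω)) (Sb T ω) - dotp (negPart (H T ω)) (Sa T ω)

/-- The gain `(H · S)_T = ∑_{j=1}^T H_j · (S_j - S_{j-1})`. -/
def gain (S : ℕ → Ω → Fin d → ℝ) (T : ℕ) (H : ℕ → Ω → Fin d → ℝ) (ω : Ω) : ℝ :=
  ∑ j ∈ Icc 1 T, dotp (H j ω) (S j ω - S (j - 1) ω)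

/-- Membership (as elements of `L⁰`, i.e. up to a.s. equality) in
`𝒜_t = ℛ_t - L⁰₊(𝓕_t)`. -/
def memA (P : Measure Ω) (F : ℕ → MeasurableSpace Ω) (Sb Sa : ℕ → Ω → Fin d → ℝ)
    (t : ℕ) (f : Ω → ℝ) : Prop :=
  ∃ H : ℕ → Ω → Fin d → ℝ, IsStrategy F t H ∧
    ∃ r : Ω → ℝ, Measurable[F t] r ∧ (∀ᵐ ω ∂P, 0 ≤ r ω) ∧
      f =ᵐ[P] fun ω => xval Sb Sa t H ω - r ω

/-- The no-arbitrage condition `𝒜_t ∩ L⁰₊(𝓕_t) = {0}` at horizon `t`. -/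
def NA (P : Measure Ω) (F : ℕ → MeasurableSpace Ω) (Sb Sa : ℕ → Ω → Fin d → ℝ)
    (t : ℕ) : Prop :=
  ∀ f : Ω → ℝ, memA P F Sb Sa t f → (∀ᵐ ω ∂P, 0 ≤ f ω) → f =ᵐ[P] 0

/-- Two measures are equivalent: mutually absolutely continuous. -/
def EquivMeasure (P Q : Measure Ω) : Prop := P ≪ Q ∧ Q ≪ P

/-- The Radon–Nikodym density `dQ/dP` belongs to `L^∞(P)`. -/
def BoundedDensity (P Q : Measure Ω) : Prop :=
  ∃ C : ℝ≥0, ∀ᵐ ω ∂P, Q.rnDeriv P ω ≤ (C : ℝ≥0∞)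

/-- `Q` is an equivalent bid-ask martingale measure (EBAMM) for `(S̲, S̄)`:
`Q ∼ P`, all `S̄_t` are `Q`-integrable, and for all `1 ≤ t ≤ T` and coordinates `i`:
`S̲_{t-1}^i ≤ E_Q[S̄_t^i | 𝓕_{t-1}]` and `E_Q[S̲_t^i | 𝓕_{t-1}] ≤ S̄_{t-1}^i` a.s. -/
def IsEBAMM (P : Measure Ω) (F : ℕ → MeasurableSpace Ω) (T : ℕ)
    (Sb Sa : ℕ → Ω → Fin d → ℝ) (Q : Measure Ω) : Prop :=
  IsProbabilityMeasure Q ∧ EquivMeasure P Q ∧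
  (∀ t ≤ T, ∀ i, Integrable (fun ω => Sa t ω i) Q) ∧
  (∀ t, 1 ≤ t → t ≤ T → ∀ i,
    (∀ᵐ ω ∂P, Sb (t - 1) ω i ≤ (Q[fun ω => Sa t ω i | F (t - 1)]) ω) ∧
    (∀ᵐ ω ∂P, (Q[fun ω => Sb t ω i | F (t - 1)]) ω ≤ Sa (t - 1) ω i))

/-- `(S̃, Q)` is a consistent price system: `Q ∼ P`, `S̃` adapted, evolving between bid and
ask prices, and a `Q`-martingale. -/
def IsCPS (P : Measure Ω) (F : ℕ → MeasurableSpace Ω) (T : ℕ)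
    (Sb Sa St : ℕ → Ω → Fin d → ℝ) (Q : Measure Ω) : Prop :=
  IsProbabilityMeasure Q ∧ EquivMeasure P Q ∧ AdaptedProc F T St ∧
  (∀ t ≤ T, ∀ i, Integrable (fun ω => St t ω i) Q) ∧
  (∀ t ≤ T, ∀ i, ∀ᵐ ω ∂P, Sb t ω i ≤ St t ω i ∧ St t ω i ≤ Sa t ω i) ∧
  (∀ t, 1 ≤ t → t ≤ T → ∀ i,
    Q[fun ω => St t ω i | F (t - 1)] =ᵐ[P] fun ω => St (t - 1) ω i)

/-- `(S̃, Q)` is a supermartingale consistent price system. -/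
def IsSupCPS (P : Measure Ω) (F : ℕ → MeasurableSpace Ω) (T : ℕ)
    (Sb Sa St : ℕ → Ω → Fin d → ℝ) (Q : Measure Ω) : Prop :=
  IsProbabilityMeasure Q ∧ EquivMeasure P Q ∧ AdaptedProc F T St ∧
  (∀ t ≤ T, ∀ i, Integrable (fun ω => St t ω i) Q) ∧
  (∀ t ≤ T, ∀ i, ∀ᵐ ω ∂P, Sb t ω i ≤ St t ω i ∧ St t ω i ≤ Sa t ω i) ∧
  (∀ t, 1 ≤ t → t ≤ T → ∀ i,
    (∀ᵐ ω ∂P, (Q[fun ω => St t ω i | F (t - 1)]) ω ≤ St (t - 1) ω i))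

/-- `(S̃, Q)` is a submartingale consistent price system. -/
def IsSubCPS (P : Measure Ω) (F : ℕ → MeasurableSpace Ω) (T : ℕ)
    (Sb Sa St : ℕ → Ω → Fin d → ℝ) (Q : Measure Ω) : Prop :=
  IsProbabilityMeasure Q ∧ EquivMeasure P Q ∧ AdaptedProc F T St ∧
  (∀ t ≤ T, ∀ i, Integrable (fun ω => St t ω i) Q) ∧
  (∀ t ≤ T, ∀ i, ∀ᵐ ω ∂P, Sb t ω i ≤ St t ω i ∧ St t ω i ≤ Sa t ω i) ∧
  (∀ t, 1 ≤ t → t ≤ T → ∀ i,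
    (∀ᵐ ω ∂P, St (t - 1) ω i ≤ (Q[fun ω => St t ω i | F (t - 1)]) ω))

/-- Membership (up to a.s. equality) in
`F_{t-1,t+k} = ℛ_{t-1,t+k}⁺ + ℛ_{t-1,t+k}⁻ - L⁰₊(𝓕_{t+k})`:
`f = Hp·(S̲_{t+k} - S̄_{t-1}) - Hm·(S̄_{t+k} - S̲_{t-1}) - r` with `Hp, Hm ≥ 0`
`𝓕_{t-1}`-measurable and `r ∈ L⁰₊(𝓕_{t+k})`. -/
def memFtk (P : Measure Ω) (F : ℕ → MeasurableSpace Ω) (Sb Sa : ℕ → Ω → Fin d → ℝ)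
    (t k : ℕ) (f : Ω → ℝ) : Prop :=
  ∃ (Hp Hm : Ω → Fin d → ℝ) (r : Ω → ℝ),
    Measurable[F (t - 1)] Hp ∧ Measurable[F (t - 1)] Hm ∧
    (∀ ω i, 0 ≤ Hp ω i) ∧ (∀ ω i, 0 ≤ Hm ω i) ∧
    Measurable[F (t + k)] r ∧ (∀ᵐ ω ∂P, 0 ≤ r ω) ∧
    f =ᵐ[P] fun ω =>
      dotp (Hp ω) (Sb (t + k) ω - Sa (t - 1) ω)
        - dotp (Hm ω) (Sa (t + k) ω - Sb (t - 1) ω) - r ω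

/-- Membership (up to a.s. equality) in
`F_t = ∑_{j<t} ℛ_{j,t}⁺ + ∑_{j<t} ℛ_{j,t}⁻ - L⁰₊(𝓕_t)`. -/
def memFt (P : Measure Ω) (F : ℕ → MeasurableSpace Ω) (Sb Sa : ℕ → Ω → Fin d → ℝ)
    (t : ℕ) (f : Ω → ℝ) : Prop :=
  ∃ (Hp Hm : ℕ → Ω → Fin d → ℝ) (r : Ω → ℝ),
    (∀ j < t, Measurable[F j] (Hp j) ∧ Measurable[F j] (Hm j)) ∧
    (∀ j < t, ∀ ω i, 0 ≤ Hp j ω i ∧ 0 ≤ Hm j ω i) ∧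
    Measurable[F t] r ∧ (∀ᵐ ω ∂P, 0 ≤ r ω) ∧
    f =ᵐ[P] fun ω =>
      (∑ j ∈ range t,
        (dotp (Hp j ω) (Sb t ω - Sa j ω) - dotp (Hm j ω) (Sa t ω - Sb j ω))) - r ω

/-- `x_{s,u}(H) = -H⁺·S̄_s + H⁻·S̲_s + H⁺·S̲_u - H⁻·S̄_u` for an `𝓕_s`-measurable `H`. -/
def xval2 (Sb Sa : ℕ → Ω → Fin d → ℝ) (s u : ℕ) (H : Ω → Fin d → ℝ) (ω : Ω) : ℝ :=
  - dotp (posPart (H ω)) (Sa s ω) + dotp (negPart (H ω)) (Sb s ω)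
    + dotp (posPart (H ω)) (Sb u ω) - dotp (negPart (H ω)) (Sa u ω)

/-- Membership (up to a.s. equality) in `𝒜_{t-1,t+k} = ℛ_{t-1,t+k} - L⁰₊(𝓕_{t+k})` where
`ℛ_{t-1,t+k} = {x_{t-1,t+k}(H) : H ∈ L⁰(ℝ^d, 𝓕_{t-1})}`. -/
def memA2 (P : Measure Ω) (F : ℕ → MeasurableSpace Ω) (Sb Sa : ℕ → Ω → Fin d → ℝ)
    (t k : ℕ) (f : Ω → ℝ) : Prop :=
  ∃ (H : Ω → Fin d → ℝ) (r : Ω → ℝ),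
    Measurable[F (t - 1)] H ∧ Measurable[F (t + k)] r ∧ (∀ᵐ ω ∂P, 0 ≤ r ω) ∧
    f =ᵐ[P] fun ω => xval2 Sb Sa (t - 1) (t + k) H ω - r ω

end Market

end BidAskFTAP

namespace BidAskAux
open MeasureTheory Filter Finset BidAskFTAP

-- scalar Abel summation
lemma abel_sum (T : ℕ) (h s : ℕ → ℝ) (h0 : h 0 = 0) :
    ∑ j ∈ Icc 1 T, h j * (s j - s (j-1))
      = h T * s T - ∑ j ∈ Icc 1 T, (h j - h (j-1)) * s (j-1) := by
  induction T with
  | zero => simp [h0]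
  | succ T ih =>
      rw [Finset.sum_Icc_succ_top (by omega), Finset.sum_Icc_succ_top (by omega), ih]
      simp only [Nat.add_sub_cancel]
      ring

lemma key_ineq {x y sb sh sc sa : ℝ} (h1 : sb ≤ sh) (h2 : sh ≤ sa) (h3 : sb ≤ sc)
    (h4 : sc ≤ sa) :
    max (-(x - y)) 0 * sb - max (x - y) 0 * sa
      ≤ -((max x 0 - max y 0) * sh) + (max (-x) 0 - max (-y) 0) * sc := by
  have hm : ∀ z : ℝ, max z 0 = (z + |z|)/2 := by
    intro z
    rcases le_total 0 z with h | h
    · rw [abs_of_nonneg h, max_eq_left h]; ring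
    · rw [abs_of_nonpos h, max_eq_right h]; ring
  simp only [hm, abs_neg]
  rcases abs_cases x with ⟨ex, hx⟩ | ⟨ex, hx⟩ <;>
    rcases abs_cases y with ⟨ey, hy⟩ | ⟨ey, hy⟩ <;>
    rcases abs_cases (x - y) with ⟨ed, hd⟩ | ⟨ed, hd⟩ <;>
    rw [ex, ey, ed] <;> nlinarith

lemma scalar_le (T : ℕ) (x sb sh sc sa : ℕ → ℝ) (hx0 : x 0 = 0)
    (hs : ∀ j ≤ T, sb j ≤ sh j ∧ sh j ≤ sa j ∧ sb j ≤ sc j ∧ sc j ≤ sa j) :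
    (∑ j ∈ Icc 1 T, (max (-(x j - x (j-1))) 0 * sb (j-1) - max (x j - x (j-1)) 0 * sa (j-1)))
        + max (x T) 0 * sb T - max (-(x T)) 0 * sa T
      ≤ (∑ j ∈ Icc 1 T, max (x j) 0 * (sh j - sh (j-1)))
        + ∑ j ∈ Icc 1 T, (-(max (-(x j)) 0)) * (sc j - sc (j-1)) := by
  have h1 := abel_sum T (fun j => max (x j) 0) sh (by simp [hx0])
  have h2 := abel_sum T (fun j => max (-(x j)) 0) sc (by simp [hx0])
  have hsum : ∑ j ∈ Icc 1 T, (max (-(x j - x (j-1))) 0 * sb (j-1) - max (x j - x (j-1)) 0 * sa (j-1))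
      ≤ ∑ j ∈ Icc 1 T, (-((max (x j) 0 - max (x (j-1)) 0) * sh (j-1))
          + (max (-(x j)) 0 - max (-(x (j-1))) 0) * sc (j-1)) := by
    refine Finset.sum_le_sum fun j hj => ?_
    simp only [Finset.mem_Icc] at hj
    obtain ⟨hb1, hb2, hb3, hb4⟩ := hs (j-1) (by omega)
    exact key_ineq hb1 hb2 hb3 hb4
  have hterm : max (x T) 0 * sb T - max (-(x T)) 0 * sa T
      ≤ max (x T) 0 * sh T - max (-(x T)) 0 * sc T := by
    have p1 : (0:ℝ) ≤ max (x T) 0 := le_max_right _ _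
    have p2 : (0:ℝ) ≤ max (-(x T)) 0 := le_max_right _ _
    obtain ⟨hb1, hb2, hb3, hb4⟩ := hs T le_rfl
    nlinarith
  have e3 : ∑ j ∈ Icc 1 T, (-((max (x j) 0 - max (x (j-1)) 0) * sh (j-1))
          + (max (-(x j)) 0 - max (-(x (j-1))) 0) * sc (j-1))
      = -(∑ j ∈ Icc 1 T, (max (x j) 0 - max (x (j-1)) 0) * sh (j-1))
        + ∑ j ∈ Icc 1 T, (max (-(x j)) 0 - max (-(x (j-1))) 0) * sc (j-1) := by
    rw [Finset.sum_add_distrib, Finset.sum_neg_distrib]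
  have e2 : ∑ j ∈ Icc 1 T, (-(max (-(x j)) 0)) * (sc j - sc (j-1))
      = -(max (-(x T)) 0 * sc T) + ∑ j ∈ Icc 1 T, (max (-(x j)) 0 - max (-(x (j-1))) 0) * sc (j-1) := by
    simp only [neg_mul, Finset.sum_neg_distrib, h2]
    ring
  rw [e3] at hsum
  linarith

variable {Ω : Type*}

/-- Pointwise comparison of liquidation value with the gains of the split strategy. -/
lemma xval_le {d T : ℕ} (H : ℕ → Ω → Fin d → ℝ) (hH0 : H 0 = 0)
    (Sb Sa Sh Sc : ℕ → Ω → Fin d → ℝ) (ω : Ω)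
    (hsand : ∀ t ≤ T, ∀ i, Sb t ω i ≤ Sh t ω i ∧ Sh t ω i ≤ Sa t ω i ∧
      Sb t ω i ≤ Sc t ω i ∧ Sc t ω i ≤ Sa t ω i) :
    xval Sb Sa T H ω ≤ gain Sh T (fun t ω i => max (H t ω i) 0) ω
      + gain Sc T (fun t ω i => -(max (-(H t ω i)) 0)) ω := by
  have key : ∀ i : Fin d,
      (∑ j ∈ Icc 1 T, (max (-(H j ω i - H (j-1) ω i)) 0 * Sb (j-1) ω i
          - max (H j ω i - H (j-1) ω i) 0 * Sa (j-1) ω i))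
        + max (H T ω i) 0 * Sb T ω i - max (-(H T ω i)) 0 * Sa T ω i
      ≤ (∑ j ∈ Icc 1 T, max (H j ω i) 0 * (Sh j ω i - Sh (j-1) ω i))
        + ∑ j ∈ Icc 1 T, (-(max (-(H j ω i)) 0)) * (Sc j ω i - Sc (j-1) ω i) := by
    intro i
    refine scalar_le T (fun j => H j ω i) (fun j => Sb j ω i) (fun j => Sh j ω i)
      (fun j => Sc j ω i) (fun j => Sa j ω i) (by simp [hH0]) ?_
    intro j hj
    exact hsand j hj i
  have hsumkey := Finset.sum_le_sum (fun i (_ : i ∈ Finset.univ) => key i)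
  simp only [xval, gain, dotp, BidAskFTAP.posPart, BidAskFTAP.negPart, Pi.sub_apply]
  calc (∑ j ∈ Icc 1 T, ((∑ i, max (-(H j ω i - H (j-1) ω i)) 0 * Sb (j-1) ω i)
          - ∑ i, max (H j ω i - H (j-1) ω i) 0 * Sa (j-1) ω i))
        + (∑ i, max (H T ω i) 0 * Sb T ω i) - ∑ i, max (-(H T ω i)) 0 * Sa T ω i
      = ∑ i, ((∑ j ∈ Icc 1 T, (max (-(H j ω i - H (j-1) ω i)) 0 * Sb (j-1) ω i
            - max (H j ω i - H (j-1) ω i) 0 * Sa (j-1) ω i))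
          + max (H T ω i) 0 * Sb T ω i - max (-(H T ω i)) 0 * Sa T ω i) := by
        conv_rhs => rw [Finset.sum_sub_distrib, Finset.sum_add_distrib]
        rw [Finset.sum_comm]
        simp only [Finset.sum_sub_distrib]
    _ ≤ ∑ i, ((∑ j ∈ Icc 1 T, max (H j ω i) 0 * (Sh j ω i - Sh (j-1) ω i))
          + ∑ j ∈ Icc 1 T, (-(max (-(H j ω i)) 0)) * (Sc j ω i - Sc (j-1) ω i)) := hsumkey
    _ = (∑ j ∈ Icc 1 T, ∑ i, max (H j ω i) 0 * (Sh j ω i - Sh (j-1) ω i))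
        + ∑ j ∈ Icc 1 T, ∑ i, (-(max (-(H j ω i)) 0)) * (Sc j ω i - Sc (j-1) ω i) := by
        rw [Finset.sum_add_distrib]
        congr 1 <;> rw [Finset.sum_comm]

section MeasureAux

lemma meas_abs {α : Type*} {m' : MeasurableSpace α} {f : α → ℝ} (hf : Measurable[m'] f) :
    Measurable[m'] fun ω => |f ω| := hf.abs

lemma meas_maxzero {α : Type*} {m' : MeasurableSpace α} {f : α → ℝ} (hf : Measurable[m'] f) :
    Measurable[m'] fun ω => max (f ω) 0 := hf.max measurable_const

lemma meas_negmaxneg {α : Type*} {m' : MeasurableSpace α} {f : α → ℝ} (hf : Measurable[m'] f) :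
    Measurable[m'] fun ω => -(max (-(f ω)) 0) := (hf.neg.max measurable_const).neg

lemma meas_pi {α : Type*} {m' : MeasurableSpace α} {d : ℕ} {f : α → Fin d → ℝ}
    (hf : ∀ i, Measurable[m'] fun ω => f ω i) : Measurable[m'] f :=
  measurable_pi_lambda _ hf

lemma meas_mono {α β : Type*} [mβ : MeasurableSpace β] {m1 m2 : MeasurableSpace α}
    (h : m1 ≤ m2) {f : α → β} (hf : Measurable[m1] f) : Measurable[m2] f :=
  fun _ hs => h _ (hf hs)

variable {Ω : Type*} [m : MeasurableSpace Ω]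

/-- Pull-out bound for conditional expectations. -/
lemma key_mul_condexp (Q : Measure Ω) [IsProbabilityMeasure Q]
    {𝓖 : MeasurableSpace Ω} (h𝓖 : 𝓖 ≤ m) {h ξ η : Ω → ℝ} (hh : Measurable[𝓖] h) {C : ℝ} (hbd : ∀ ω, |h ω| ≤ C)
    (hh0 : ∀ ω, 0 ≤ h ω) (hξ : Integrable ξ Q) (hη : Integrable η Q)
    (hηm : Measurable[𝓖] η) (hcle : ∀ᵐ ω ∂Q, (Q[ξ|𝓖]) ω ≤ η ω) :
    Integrable (fun ω => h ω * (ξ ω - η ω)) Q ∧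
      Q[fun ω => h ω * (ξ ω - η ω)|𝓖] ≤ᵐ[Q] 0 := by
  have hhm : Measurable[m] h := meas_mono h𝓖 hh
  have hint : Integrable (fun ω => h ω * (ξ ω - η ω)) Q :=
    (hξ.sub hη).bdd_mul hhm.aestronglyMeasurable
      (c := C) (ae_of_all _ fun ω => by simpa [Real.norm_eq_abs] using hbd ω)
  refine ⟨hint, ?_⟩
  have hpull : Q[h * (ξ - η)|𝓖] =ᵐ[Q] h * Q[ξ - η|𝓖] :=
    condExp_mul_of_stronglyMeasurable_left hh.stronglyMeasurable hint (hξ.sub hη)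
  have hsub : Q[ξ - η|𝓖] =ᵐ[Q] Q[ξ|𝓖] - Q[η|𝓖] := condExp_sub hξ hη _
  have hηeq : Q[η|𝓖] = η := condExp_of_stronglyMeasurable (μ := Q) h𝓖 hηm.stronglyMeasurable hη
  filter_upwards [hpull, hsub, hcle] with ω h1 h2 h3
  have e1 : (Q[fun ω => h ω * (ξ ω - η ω)|𝓖]) ω = h ω * ((Q[ξ - η|𝓖]) ω) := h1
  have e2 : (Q[ξ - η|𝓖]) ω = (Q[ξ|𝓖]) ω - η ω := by
    have : (Q[ξ - η|𝓖]) ω = (Q[ξ|𝓖]) ω - (Q[η|𝓖]) ω := h2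
    rw [this, hηeq]
  show (Q[fun ω => h ω * (ξ ω - η ω)|𝓖]) ω ≤ (0:Ω → ℝ) ω
  rw [e1, e2, Pi.zero_apply]
  have := mul_le_mul_of_nonneg_left (sub_nonpos.2 h3) (hh0 ω)
  simpa using this

/-- The increment of the combined gains process. -/
def Ginc {d : ℕ} (Sh Sc Hh Hc : ℕ → Ω → Fin d → ℝ) (j : ℕ) (ω : Ω) : ℝ :=
  dotp (Hh j ω) (Sh j ω - Sh (j-1) ω) + dotp (Hc j ω) (Sc j ω - Sc (j-1) ω)

/-- The combined gains process. -/
def Xproc {d : ℕ} (Sh Sc Hh Hc : ℕ → Ω → Fin d → ℝ) (t : ℕ) (ω : Ω) : ℝ :=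
  ∑ j ∈ Icc 1 t, Ginc Sh Sc Hh Hc j ω

omit m in
lemma gain_add_eq {d T : ℕ} (Sh Sc Hh Hc : ℕ → Ω → Fin d → ℝ) (ω : Ω) :
    gain Sh T Hh ω + gain Sc T Hc ω = Xproc Sh Sc Hh Hc T ω := by
  simp only [gain, Xproc, Ginc, ← Finset.sum_add_distrib]

omit m in
lemma meas_Ginc {d T : ℕ} (F : ℕ → MeasurableSpace Ω) (hmono : Monotone F)
    {Sh Sc Hh Hc : ℕ → Ω → Fin d → ℝ}
    (hShm : ∀ s ≤ T, Measurable[F s] (Sh s)) (hScm : ∀ s ≤ T, Measurable[F s] (Sc s))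
    (hHh : ∀ j, 1 ≤ j → j ≤ T → Measurable[F (j-1)] (Hh j))
    (hHc : ∀ j, 1 ≤ j → j ≤ T → Measurable[F (j-1)] (Hc j))
    (j : ℕ) (hj1 : 1 ≤ j) (hjT : j ≤ T) : Measurable[F j] (Ginc Sh Sc Hh Hc j) := by
  have l1 : F (j-1) ≤ F j := hmono (by omega)
  have cm : ∀ (K : Ω → Fin d → ℝ) (G : MeasurableSpace Ω), Measurable[G] K →
      ∀ i, Measurable[G] (fun ω => K ω i) := fun K G hK i => (measurable_pi_apply i).comp hK
  show Measurable[F j] fun ω =>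
    (∑ i, Hh j ω i * (Sh j ω i - Sh (j-1) ω i)) + ∑ i, Hc j ω i * (Sc j ω i - Sc (j-1) ω i)
  refine Measurable.add (Finset.measurable_sum _ fun i _ => Measurable.mul ?_
      (Measurable.sub ?_ ?_)) (Finset.measurable_sum _ fun i _ => Measurable.mul ?_
      (Measurable.sub ?_ ?_))
  · exact meas_mono l1 (cm _ _ (hHh j hj1 hjT) i)
  · exact cm _ _ (hShm j hjT) i
  · exact meas_mono l1 (cm _ _ (hShm (j-1) (by omega)) i)
  · exact meas_mono l1 (cm _ _ (hHc j hj1 hjT) i)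
  · exact cm _ _ (hScm j hjT) i
  · exact meas_mono l1 (cm _ _ (hScm (j-1) (by omega)) i)

omit m in
lemma meas_Xproc {d T : ℕ} (F : ℕ → MeasurableSpace Ω) (hmono : Monotone F)
    {Sh Sc Hh Hc : ℕ → Ω → Fin d → ℝ}
    (hShm : ∀ s ≤ T, Measurable[F s] (Sh s)) (hScm : ∀ s ≤ T, Measurable[F s] (Sc s))
    (hHh : ∀ j, 1 ≤ j → j ≤ T → Measurable[F (j-1)] (Hh j))
    (hHc : ∀ j, 1 ≤ j → j ≤ T → Measurable[F (j-1)] (Hc j))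
    (t : ℕ) (htT : t ≤ T) : Measurable[F t] (Xproc Sh Sc Hh Hc t) := by
  show Measurable[F t] fun ω => ∑ j ∈ Icc 1 t, Ginc Sh Sc Hh Hc j ω
  refine Finset.measurable_sum _ fun j hj => ?_
  simp only [Finset.mem_Icc] at hj
  exact meas_mono (hmono hj.2) (meas_Ginc F hmono hShm hScm hHh hHc j hj.1 (le_trans hj.2 htT))

lemma step_condexp {d T : ℕ} (F : ℕ → MeasurableSpace Ω) (hle : ∀ t, F t ≤ m)
    (Q : Measure Ω) [IsProbabilityMeasure Q]
    {Sh Sc Hh Hc : ℕ → Ω → Fin d → ℝ}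
    (hShm : ∀ s ≤ T, Measurable[F s] (Sh s)) (hScm : ∀ s ≤ T, Measurable[F s] (Sc s))
    (hShi : ∀ s ≤ T, ∀ i, Integrable (fun ω => Sh s ω i) Q)
    (hSci : ∀ s ≤ T, ∀ i, Integrable (fun ω => Sc s ω i) Q)
    (hsupm : ∀ s, 1 ≤ s → s ≤ T → ∀ i,
      ∀ᵐ ω ∂Q, (Q[fun ω => Sh s ω i|F (s-1)]) ω ≤ Sh (s-1) ω i)
    (hsubm : ∀ s, 1 ≤ s → s ≤ T → ∀ i,
      ∀ᵐ ω ∂Q, Sc (s-1) ω i ≤ (Q[fun ω => Sc s ω i|F (s-1)]) ω)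
    (hHh : ∀ j, 1 ≤ j → j ≤ T → Measurable[F (j-1)] (Hh j)) (hHhp : NonnegStrategy T Hh)
    (hHc : ∀ j, 1 ≤ j → j ≤ T → Measurable[F (j-1)] (Hc j)) (hHcn : NonposStrategy T Hc)
    (t : ℕ) (ht1 : 1 ≤ t) (htT : t ≤ T)
    (B : Set Ω) (hB : MeasurableSet[F (t-1)] B) (n : ℝ) (hn0 : 0 ≤ n)
    (hbd : ∀ ω ∈ B, ∀ i, |Hh t ω i| ≤ n ∧ |Hc t ω i| ≤ n) :
    Integrable (B.indicator (Ginc Sh Sc Hh Hc t)) Q ∧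
      Q[B.indicator (Ginc Sh Sc Hh Hc t)|F (t-1)] ≤ᵐ[Q] 0 := by
  have ht1T : t - 1 ≤ T := by omega
  have keyh : ∀ i : Fin d,
      Integrable (fun ω => B.indicator (fun ω => Hh t ω i) ω
        * (Sh t ω i - Sh (t-1) ω i)) Q ∧
      Q[fun ω => B.indicator (fun ω => Hh t ω i) ω
        * (Sh t ω i - Sh (t-1) ω i)|F (t-1)] ≤ᵐ[Q] 0 := by
    intro i
    refine key_mul_condexp Q (hle (t-1))
      (((measurable_pi_apply i).comp (hHh t ht1 htT)).indicator hB) (C := n) ?_ ?_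
      (hShi t htT i) (hShi (t-1) ht1T i)
      ((measurable_pi_apply i).comp (hShm (t-1) ht1T)) (hsupm t ht1 htT i)
    · intro ω; by_cases hω : ω ∈ B
      · rw [Set.indicator_of_mem hω]; exact (hbd ω hω i).1
      · rw [Set.indicator_of_notMem hω]; simpa using hn0
    · intro ω; exact Set.indicator_nonneg (fun ω' _ => hHhp t htT ω' i) ω
  have keyc : ∀ i : Fin d,
      Integrable (fun ω => B.indicator (fun ω => -(Hc t ω i)) ω
        * (-(Sc t ω i) - -(Sc (t-1) ω i))) Q ∧
      Q[fun ω => B.indicator (fun ω => -(Hc t ω i)) ω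
        * (-(Sc t ω i) - -(Sc (t-1) ω i))|F (t-1)] ≤ᵐ[Q] 0 := by
    intro i
    have hnegc : ∀ᵐ ω ∂Q,
        (Q[fun ω => -(Sc t ω i)|F (t-1)]) ω ≤ -(Sc (t-1) ω i) := by
      filter_upwards [condExp_neg (μ := Q) (m := F (t-1)) (fun ω => Sc t ω i),
        hsubm t ht1 htT i] with ω h1 h2
      have e1 : (Q[fun ω => -(Sc t ω i)|F (t-1)]) ω
          = -((Q[fun ω => Sc t ω i|F (t-1)]) ω) := h1
      rw [e1]
      linarith
    refine key_mul_condexp Q (hle (t-1))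
      ((((measurable_pi_apply i).comp (hHc t ht1 htT)).neg).indicator hB) (C := n) ?_ ?_
      ((hSci t htT i).neg) ((hSci (t-1) ht1T i).neg)
      (((measurable_pi_apply i).comp (hScm (t-1) ht1T)).neg) hnegc
    · intro ω; by_cases hω : ω ∈ B
      · rw [Set.indicator_of_mem hω]; simpa [abs_neg] using (hbd ω hω i).2
      · rw [Set.indicator_of_notMem hω]; simpa using hn0
    · intro ω
      exact Set.indicator_nonneg (fun ω' _ => neg_nonneg.2 (hHcn t htT ω' i)) ω
  have hdec : B.indicator (Ginc Sh Sc Hh Hc t)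
      = (fun ω => ∑ i, B.indicator (fun ω => Hh t ω i) ω * (Sh t ω i - Sh (t-1) ω i))
        + fun ω => ∑ i, B.indicator (fun ω => -(Hc t ω i)) ω
            * (-(Sc t ω i) - -(Sc (t-1) ω i)) := by
    funext ω
    by_cases hω : ω ∈ B
    · simp only [Set.indicator_of_mem hω, Pi.add_apply, Ginc, dotp, Pi.sub_apply]
      congr 1
      refine Finset.sum_congr rfl fun i _ => by ring
    · simp [Set.indicator_of_notMem hω]
  have hint1 : Integrable (fun ω => ∑ i, B.indicator (fun ω => Hh t ω i) ω
      * (Sh t ω i - Sh (t-1) ω i)) Q :=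
    integrable_finset_sum _ fun i _ => (keyh i).1
  have hint2 : Integrable (fun ω => ∑ i, B.indicator (fun ω => -(Hc t ω i)) ω
      * (-(Sc t ω i) - -(Sc (t-1) ω i))) Q :=
    integrable_finset_sum _ fun i _ => (keyc i).1
  constructor
  · rw [hdec]; exact hint1.add hint2
  · have hadd := condExp_add (μ := Q) (m := F (t-1)) hint1 hint2
    have hs1 : Q[fun ω => ∑ i, B.indicator (fun ω => Hh t ω i) ω
        * (Sh t ω i - Sh (t-1) ω i)|F (t-1)] ≤ᵐ[Q] 0 := by
      have he : (fun ω => ∑ i, B.indicator (fun ω => Hh t ω i) ω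
          * (Sh t ω i - Sh (t-1) ω i))
          = ∑ i, fun ω => B.indicator (fun ω => Hh t ω i) ω * (Sh t ω i - Sh (t-1) ω i) := by
        funext ω; simp
      rw [he]
      have hcs := condExp_finsetSum (μ := Q) (m := F (t-1))
        (fun i (_ : i ∈ Finset.univ) => (keyh i).1)
      have hall : ∀ᵐ ω ∂Q, ∀ i : Fin d,
          (Q[fun ω => B.indicator (fun ω => Hh t ω i) ω
            * (Sh t ω i - Sh (t-1) ω i)|F (t-1)]) ω ≤ 0 := by
        rw [ae_all_iff]
        exact fun i => (keyh i).2
      filter_upwards [hcs, hall] with ω h1 h2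
      have : (∑ i : Fin d, Q[fun ω => B.indicator (fun ω => Hh t ω i) ω
          * (Sh t ω i - Sh (t-1) ω i)|F (t-1)]) ω
          = ∑ i : Fin d, (Q[fun ω => B.indicator (fun ω => Hh t ω i) ω
            * (Sh t ω i - Sh (t-1) ω i)|F (t-1)]) ω := by simp
      show _ ≤ (0:Ω → ℝ) ω
      rw [h1, this, Pi.zero_apply]
      exact Finset.sum_nonpos fun i _ => h2 i
    have hs2 : Q[fun ω => ∑ i, B.indicator (fun ω => -(Hc t ω i)) ω
        * (-(Sc t ω i) - -(Sc (t-1) ω i))|F (t-1)] ≤ᵐ[Q] 0 := by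
      have he : (fun ω => ∑ i, B.indicator (fun ω => -(Hc t ω i)) ω
          * (-(Sc t ω i) - -(Sc (t-1) ω i)))
          = ∑ i, fun ω => B.indicator (fun ω => -(Hc t ω i)) ω
            * (-(Sc t ω i) - -(Sc (t-1) ω i)) := by
        funext ω; simp
      rw [he]
      have hcs := condExp_finsetSum (μ := Q) (m := F (t-1))
        (fun i (_ : i ∈ Finset.univ) => (keyc i).1)
      have hall : ∀ᵐ ω ∂Q, ∀ i : Fin d,
          (Q[fun ω => B.indicator (fun ω => -(Hc t ω i)) ω
            * (-(Sc t ω i) - -(Sc (t-1) ω i))|F (t-1)]) ω ≤ 0 := by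
        rw [ae_all_iff]
        exact fun i => (keyc i).2
      filter_upwards [hcs, hall] with ω h1 h2
      have : (∑ i : Fin d, Q[fun ω => B.indicator (fun ω => -(Hc t ω i)) ω
          * (-(Sc t ω i) - -(Sc (t-1) ω i))|F (t-1)]) ω
          = ∑ i : Fin d, (Q[fun ω => B.indicator (fun ω => -(Hc t ω i)) ω
            * (-(Sc t ω i) - -(Sc (t-1) ω i))|F (t-1)]) ω := by simp
      show _ ≤ (0:Ω → ℝ) ω
      rw [h1, this, Pi.zero_apply]
      exact Finset.sum_nonpos fun i _ => h2 i
    rw [hdec]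
    filter_upwards [hadd, hs1, hs2] with ω h1 h2 h3
    show _ ≤ (0:Ω → ℝ) ω
    have h2' : (Q[fun ω => ∑ i, B.indicator (fun ω => Hh t ω i) ω
        * (Sh t ω i - Sh (t-1) ω i)|F (t-1)]) ω ≤ 0 := h2
    have h3' : (Q[fun ω => ∑ i, B.indicator (fun ω => -(Hc t ω i)) ω
        * (-(Sc t ω i) - -(Sc (t-1) ω i))|F (t-1)]) ω ≤ 0 := h3
    rw [h1, Pi.zero_apply]
    simp only [Pi.add_apply]
    linarith


lemma part1 {d T : ℕ} (F : ℕ → MeasurableSpace Ω) (hmono : Monotone F) (hle : ∀ t, F t ≤ m)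
    (Q : Measure Ω) [IsProbabilityMeasure Q]
    {Sh Sc Hh Hc : ℕ → Ω → Fin d → ℝ}
    (hShm : ∀ s ≤ T, Measurable[F s] (Sh s)) (hScm : ∀ s ≤ T, Measurable[F s] (Sc s))
    (hShi : ∀ s ≤ T, ∀ i, Integrable (fun ω => Sh s ω i) Q)
    (hSci : ∀ s ≤ T, ∀ i, Integrable (fun ω => Sc s ω i) Q)
    (hsupm : ∀ s, 1 ≤ s → s ≤ T → ∀ i,
      ∀ᵐ ω ∂Q, (Q[fun ω => Sh s ω i|F (s-1)]) ω ≤ Sh (s-1) ω i)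
    (hsubm : ∀ s, 1 ≤ s → s ≤ T → ∀ i,
      ∀ᵐ ω ∂Q, Sc (s-1) ω i ≤ (Q[fun ω => Sc s ω i|F (s-1)]) ω)
    (hHh : ∀ j, 1 ≤ j → j ≤ T → Measurable[F (j-1)] (Hh j)) (hHhp : NonnegStrategy T Hh)
    (hHc : ∀ j, 1 ≤ j → j ≤ T → Measurable[F (j-1)] (Hc j)) (hHcn : NonposStrategy T Hc)
    (hpos : ∀ᵐ ω ∂Q, 0 ≤ Xproc Sh Sc Hh Hc T ω) :
    ∀ᵐ ω ∂Q, Xproc Sh Sc Hh Hc T ω = 0 := by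
  suffices main : ∀ t, t ≤ T → (∀ᵐ ω ∂Q, 0 ≤ Xproc Sh Sc Hh Hc t ω) →
      ∀ᵐ ω ∂Q, Xproc Sh Sc Hh Hc t ω = 0 from main T le_rfl hpos
  intro t
  induction t with
  | zero => intro _ _; filter_upwards with ω; simp [Xproc]
  | succ t ih =>
    intro hT hp
    have htT : t ≤ T := by omega
    have hsucc : ∀ ω, Xproc Sh Sc Hh Hc (t+1) ω
        = Xproc Sh Sc Hh Hc t ω + Ginc Sh Sc Hh Hc (t+1) ω := fun ω =>
      Finset.sum_Icc_succ_top (by omega) _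
    have hXm : Measurable[F t] (Xproc Sh Sc Hh Hc t) :=
      meas_Xproc F hmono hShm hScm hHh hHc t htT
    have hHm1 : Measurable[F t] (Hh (t+1)) := hHh (t+1) (by omega) hT
    have hHm2 : Measurable[F t] (Hc (t+1)) := hHc (t+1) (by omega) hT
    -- truncation sets
    set Y := Xproc Sh Sc Hh Hc t with hYdef
    set G := Ginc Sh Sc Hh Hc (t+1) with hGdef
    set Bs : ℕ → Set Ω := fun n =>
      {ω | |Y ω| ≤ (n:ℝ)} ∩ ⋂ i : Fin d,
        ({ω | |Hh (t+1) ω i| ≤ (n:ℝ)} ∩ {ω | |Hc (t+1) ω i| ≤ (n:ℝ)}) with hBsdef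
    have hBmeas : ∀ n : ℕ, MeasurableSet[F t] (Bs n) := by
      intro n
      refine MeasurableSet.inter ?_ (MeasurableSet.iInter fun i => MeasurableSet.inter ?_ ?_)
      · exact (meas_abs hXm) (measurableSet_Iic (a := (n:ℝ)))
      · exact (meas_abs ((measurable_pi_apply i).comp hHm1)) (measurableSet_Iic (a := (n:ℝ)))
      · exact (meas_abs ((measurable_pi_apply i).comp hHm2)) (measurableSet_Iic (a := (n:ℝ)))
    have hBmem : ∀ n : ℕ, ∀ ω, ω ∈ Bs n ↔
        (|Y ω| ≤ (n:ℝ) ∧ ∀ i, |Hh (t+1) ω i| ≤ (n:ℝ) ∧ |Hc (t+1) ω i| ≤ (n:ℝ)) := by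
      intro n ω
      simp [hBsdef, Set.mem_iInter]
    have hBexists : ∀ ω, ∃ n : ℕ, ω ∈ Bs n := by
      intro ω
      obtain ⟨n, hn⟩ := exists_nat_ge
        (|Y ω| + ∑ i, (|Hh (t+1) ω i| + |Hc (t+1) ω i|))
      have hsnn : (0:ℝ) ≤ ∑ i, (|Hh (t+1) ω i| + |Hc (t+1) ω i|) :=
        Finset.sum_nonneg fun i _ => by positivity
      refine ⟨n, (hBmem n ω).2 ⟨by linarith, fun i => ?_⟩⟩
      have h1 : |Hh (t+1) ω i| + |Hc (t+1) ω i|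
          ≤ ∑ i', (|Hh (t+1) ω i'| + |Hc (t+1) ω i'|) :=
        Finset.single_le_sum (f := fun i' => |Hh (t+1) ω i'| + |Hc (t+1) ω i'|)
          (fun i' _ => by positivity) (Finset.mem_univ i)
      have h2 : (0:ℝ) ≤ |Y ω| := abs_nonneg _
      constructor
      · have := abs_nonneg (Hc (t+1) ω i); linarith
      · have := abs_nonneg (Hh (t+1) ω i); linarith
    -- Step A : 0 ≤ Y a.e.
    have hstepA : ∀ n : ℕ, ∀ᵐ ω ∂Q, 0 ≤ (Bs n).indicator Y ω := by
      intro n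
      obtain ⟨hint, hcond⟩ := step_condexp F hle Q hShm hScm hShi hSci hsupm hsubm
        hHh hHhp hHc hHcn (t+1) (by omega) hT (Bs n) (hBmeas n) (n:ℝ) (by positivity)
        (fun ω hω i => ((hBmem n ω).1 hω).2 i)
      have hdec : (Bs n).indicator (Xproc Sh Sc Hh Hc (t+1))
          = (Bs n).indicator Y + (Bs n).indicator G := by
        funext ω
        by_cases hω : ω ∈ Bs n
        · simp only [Set.indicator_of_mem hω, Pi.add_apply, hsucc ω]
        · simp [Set.indicator_of_notMem hω]
      have hYint : Integrable ((Bs n).indicator Y) Q := by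
        refine Integrable.mono' (integrable_const (n:ℝ)) ?_ ?_
        · exact (meas_mono (hle t) (hXm.indicator (hBmeas n))).aestronglyMeasurable
        · filter_upwards with ω
          by_cases hω : ω ∈ Bs n
          · rw [Set.indicator_of_mem hω]
            simpa [Real.norm_eq_abs] using ((hBmem n ω).1 hω).1
          · rw [Set.indicator_of_notMem hω]; simp
      have hda : Q[(Bs n).indicator (Xproc Sh Sc Hh Hc (t+1))|F t]
          =ᵐ[Q] Q[(Bs n).indicator Y|F t] + Q[(Bs n).indicator G|F t] := by
        rw [hdec]; exact condExp_add hYint hint _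
      have hYcond : Q[(Bs n).indicator Y|F t] = (Bs n).indicator Y :=
        condExp_of_stronglyMeasurable (hle t)
          ((hXm.indicator (hBmeas n)).stronglyMeasurable) hYint
      have hnonneg : 0 ≤ᵐ[Q] Q[(Bs n).indicator (Xproc Sh Sc Hh Hc (t+1))|F t] := by
        refine condExp_nonneg ?_
        filter_upwards [hp] with ω h0
        show (0:Ω → ℝ) ω ≤ _
        rw [Pi.zero_apply]
        by_cases hω : ω ∈ Bs n
        · rw [Set.indicator_of_mem hω]; exact h0
        · rw [Set.indicator_of_notMem hω]
      filter_upwards [hda, hcond, hnonneg] with ω h1 h2 h3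
      have h1' : (Q[(Bs n).indicator (Xproc Sh Sc Hh Hc (t+1))|F t]) ω
          = (Bs n).indicator Y ω + (Q[(Bs n).indicator G|F t]) ω := by
        rw [h1, Pi.add_apply, hYcond]
      have h2' : (Q[(Bs n).indicator G|F t]) ω ≤ 0 := h2
      have h3' : (0:ℝ) ≤ (Q[(Bs n).indicator (Xproc Sh Sc Hh Hc (t+1))|F t]) ω := h3
      linarith
    have hA : ∀ᵐ ω ∂Q, 0 ≤ Y ω := by
      have hall : ∀ᵐ ω ∂Q, ∀ n : ℕ, 0 ≤ (Bs n).indicator Y ω := ae_all_iff.2 hstepA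
      filter_upwards [hall] with ω hω
      obtain ⟨n, hn⟩ := hBexists ω
      have := hω n
      rwa [Set.indicator_of_mem hn] at this
    have hY0 := ih htT hA
    have hG0 : ∀ᵐ ω ∂Q, 0 ≤ G ω := by
      filter_upwards [hp, hY0] with ω h1 h2
      have h3 := hsucc ω
      rw [h3, h2, zero_add] at h1
      exact h1
    -- Step B : G = 0 a.e.
    set Bs' : ℕ → Set Ω := fun n =>
      ⋂ i : Fin d, ({ω | |Hh (t+1) ω i| ≤ (n:ℝ)} ∩ {ω | |Hc (t+1) ω i| ≤ (n:ℝ)}) with hBs'def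
    have hB'meas : ∀ n : ℕ, MeasurableSet[F t] (Bs' n) := by
      intro n
      refine MeasurableSet.iInter fun i => MeasurableSet.inter ?_ ?_
      · exact (meas_abs ((measurable_pi_apply i).comp hHm1)) (measurableSet_Iic (a := (n:ℝ)))
      · exact (meas_abs ((measurable_pi_apply i).comp hHm2)) (measurableSet_Iic (a := (n:ℝ)))
    have hB'mem : ∀ n : ℕ, ∀ ω, ω ∈ Bs' n ↔
        (∀ i, |Hh (t+1) ω i| ≤ (n:ℝ) ∧ |Hc (t+1) ω i| ≤ (n:ℝ)) := by
      intro n ω; simp [hBs'def, Set.mem_iInter]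
    have hB'exists : ∀ ω, ∃ n : ℕ, ω ∈ Bs' n := by
      intro ω
      obtain ⟨n, hn⟩ := hBexists ω
      exact ⟨n, hn.2⟩
    have hstepB : ∀ n : ℕ, ∀ᵐ ω ∂Q, (Bs' n).indicator G ω = 0 := by
      intro n
      obtain ⟨hint, hcond⟩ := step_condexp F hle Q hShm hScm hShi hSci hsupm hsubm
        hHh hHhp hHc hHcn (t+1) (by omega) hT (Bs' n) (hB'meas n) (n:ℝ) (by positivity)
        (fun ω hω i => ((hB'mem n ω).1 hω) i)
      have hf0 : 0 ≤ᵐ[Q] (Bs' n).indicator G := by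
        filter_upwards [hG0] with ω h0
        show (0:Ω → ℝ) ω ≤ _
        rw [Pi.zero_apply]
        by_cases hω : ω ∈ Bs' n
        · rw [Set.indicator_of_mem hω]; exact h0
        · rw [Set.indicator_of_notMem hω]
      have hι : ∫ ω, (Bs' n).indicator G ω ∂Q ≤ 0 := by
        rw [← integral_condExp (hle t) (f := (Bs' n).indicator G) (μ := Q)]
        exact integral_nonpos_of_ae hcond
      have hι0 : ∫ ω, (Bs' n).indicator G ω ∂Q = 0 :=
        le_antisymm hι (integral_nonneg_of_ae hf0)
      have := (integral_eq_zero_iff_of_nonneg_ae hf0 hint).1 hι0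
      filter_upwards [this] with ω hω
      exact hω
    have hGz : ∀ᵐ ω ∂Q, G ω = 0 := by
      have hall : ∀ᵐ ω ∂Q, ∀ n : ℕ, (Bs' n).indicator G ω = 0 := ae_all_iff.2 hstepB
      filter_upwards [hall] with ω hω
      obtain ⟨n, hn⟩ := hB'exists ω
      have := hω n
      rwa [Set.indicator_of_mem hn] at this
    filter_upwards [hY0, hGz] with ω h1 h2
    rw [hsucc ω, h1, h2, add_zero]


end MeasureAux


end BidAskAux


open BidAskFTAP in
/-- If there exist a supermartingale consistent price system `(Ŝ, Q)` and a
submartingale consistent price system `(Š, Q)` under the same measure `Q`, then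
`R̃_T ∩ L⁰₊ = {0}` and the market satisfies no arbitrage, `𝒜_T ∩ L⁰₊ = {0}`. -/
theorem stmt0 {Ω : Type*} [m : MeasurableSpace Ω] {d T : ℕ} (hT : 1 ≤ T)
    (P : MeasureTheory.Measure Ω) [MeasureTheory.IsProbabilityMeasure P]
    (hcomp : P.IsComplete)
    (F : ℕ → MeasurableSpace Ω) (hF : IsFiltration F T)
    (Sb Sa : ℕ → Ω → Fin d → ℝ) (hBA : IsBidAsk P F T Sb Sa)
    (Q : MeasureTheory.Measure Ω) (Shat Scheck : ℕ → Ω → Fin d → ℝ)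
    (hsup : IsSupCPS P F T Sb Sa Shat Q) (hsub : IsSubCPS P F T Sb Sa Scheck Q) :
    (∀ Hhat Hcheck : ℕ → Ω → Fin d → ℝ,
      IsStrategy F T Hhat → NonnegStrategy T Hhat →
      IsStrategy F T Hcheck → NonposStrategy T Hcheck →
      (∀ᵐ ω ∂P, 0 ≤ gain Shat T Hhat ω + gain Scheck T Hcheck ω) →
      (fun ω => gain Shat T Hhat ω + gain Scheck T Hcheck ω) =ᵐ[P] 0) ∧
    NA P F Sb Sa T := by
  obtain ⟨hFmono, hFle, hFT⟩ := hF
  obtain ⟨hQprob, ⟨hPQ, hQP⟩, hShad, hShint, hShsand, hShsup⟩ := hsup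
  obtain ⟨-, -, hScad, hScint, hScsand, hScsub⟩ := hsub
  haveI : MeasureTheory.IsProbabilityMeasure Q := hQprob
  have hsupQ : ∀ s, 1 ≤ s → s ≤ T → ∀ i,
      ∀ᵐ ω ∂Q, (Q[fun ω => Shat s ω i|F (s-1)]) ω ≤ Shat (s-1) ω i :=
    fun s h1 h2 i => hQP.ae_le (hShsup s h1 h2 i)
  have hsubQ : ∀ s, 1 ≤ s → s ≤ T → ∀ i,
      ∀ᵐ ω ∂Q, Scheck (s-1) ω i ≤ (Q[fun ω => Scheck s ω i|F (s-1)]) ω :=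
    fun s h1 h2 i => hQP.ae_le (hScsub s h1 h2 i)
  have key : ∀ Hhat Hcheck : ℕ → Ω → Fin d → ℝ,
      IsStrategy F T Hhat → NonnegStrategy T Hhat →
      IsStrategy F T Hcheck → NonposStrategy T Hcheck →
      (∀ᵐ ω ∂P, 0 ≤ gain Shat T Hhat ω + gain Scheck T Hcheck ω) →
      (fun ω => gain Shat T Hhat ω + gain Scheck T Hcheck ω) =ᵐ[P] 0 := by
    intro Hh Hc hs1 hp1 hs2 hp2 hpos
    have hposQ : ∀ᵐ ω ∂Q, 0 ≤ BidAskAux.Xproc Shat Scheck Hh Hc T ω := by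
      filter_upwards [hQP.ae_le hpos] with ω h
      rwa [← BidAskAux.gain_add_eq]
    have hXz := BidAskAux.part1 F hFmono hFle Q hShad hScad hShint hScint hsupQ hsubQ
      (fun j h1 h2 => hs1.2 j h1 h2) hp1 (fun j h1 h2 => hs2.2 j h1 h2) hp2 hposQ
    filter_upwards [hPQ.ae_le hXz] with ω h
    show _ = (0 : Ω → ℝ) ω
    rw [Pi.zero_apply, BidAskAux.gain_add_eq]
    exact h
  refine ⟨key, ?_⟩
  intro f hmem hf0
  obtain ⟨H, hstrat, r, hrmeas, hr0, hfeq⟩ := hmem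
  have hHpStrat : IsStrategy F T (fun t ω i => max (H t ω i) 0) := by
    constructor
    · funext ω i; simp [hstrat.1]
    · intro t h1 h2
      exact BidAskAux.meas_pi fun i =>
        BidAskAux.meas_maxzero ((measurable_pi_apply i).comp (hstrat.2 t h1 h2))
  have hHmStrat : IsStrategy F T (fun t ω i => -(max (-(H t ω i)) 0)) := by
    constructor
    · funext ω i; simp [hstrat.1]
    · intro t h1 h2
      exact BidAskAux.meas_pi fun i =>
        BidAskAux.meas_negmaxneg ((measurable_pi_apply i).comp (hstrat.2 t h1 h2))
  have hHpNN : NonnegStrategy T (fun t ω i => max (H t ω i) 0) :=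
    fun t _ ω i => le_max_right _ _
  have hHmNP : NonposStrategy T (fun t ω i => -(max (-(H t ω i)) 0)) :=
    fun t _ ω i => neg_nonpos.2 (le_max_right _ _)
  have hsand : ∀ᵐ ω ∂P, ∀ t, t ≤ T → ∀ i,
      Sb t ω i ≤ Shat t ω i ∧ Shat t ω i ≤ Sa t ω i ∧
      Sb t ω i ≤ Scheck t ω i ∧ Scheck t ω i ≤ Sa t ω i := by
    rw [MeasureTheory.ae_all_iff]
    intro t
    by_cases htT : t ≤ T
    · have h1 := MeasureTheory.ae_all_iff.2 fun i => hShsand t htT i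
      have h2 := MeasureTheory.ae_all_iff.2 fun i => hScsand t htT i
      filter_upwards [h1, h2] with ω k1 k2 _ i
      exact ⟨(k1 i).1, (k1 i).2, (k2 i).1, (k2 i).2⟩
    · filter_upwards with ω ht
      exact absurd ht htT
  have hcomp : ∀ᵐ ω ∂P, xval Sb Sa T H ω
      ≤ gain Shat T (fun t ω i => max (H t ω i) 0) ω
        + gain Scheck T (fun t ω i => -(max (-(H t ω i)) 0)) ω := by
    filter_upwards [hsand] with ω hω
    exact BidAskAux.xval_le H hstrat.1 Sb Sa Shat Scheck ω fun t ht i => hω t ht i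
  have hg0 : ∀ᵐ ω ∂P, 0 ≤ gain Shat T (fun t ω i => max (H t ω i) 0) ω
      + gain Scheck T (fun t ω i => -(max (-(H t ω i)) 0)) ω := by
    filter_upwards [hcomp, hf0, hfeq, hr0] with ω h1 h2 h3 h4
    rw [h3] at h2
    linarith
  have hzero := key _ _ hHpStrat hHpNN hHmStrat hHmNP hg0
  filter_upwards [hzero, hcomp, hfeq, hf0, hr0] with ω h1 h2 h3 h4 h5
  have h1' : gain Shat T (fun t ω i => max (H t ω i) 0) ω
      + gain Scheck T (fun t ω i => -(max (-(H t ω i)) 0)) ω = 0 := h1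
  show f ω = (0 : Ω → ℝ) ω
  rw [Pi.zero_apply]
  rw [h3] at h4 ⊢
  linarith
end
end

section
/- Let Ŝ and Š be ℝ^d-valued 𝔽-adapted processes. Define R̃_T = {(Ĥ·Ŝ)_T + (Ȟ·Š)_T : Ĥ ∈ 𝒫_T^+, Ȟ ∈ 𝒫_T^-} and R̃_T^b = {(Ĥ·Ŝ)_T + (Ȟ·Š)_T : Ĥ ∈ 𝒫_T^+, Ȟ ∈ 𝒫_T^-, Ĥ and Ȟ bounded}, where (H·S)_T = Σ_{j=1}^T H_j·(S_j − S_{j−1}). Then R̃_T ∩ L^0_+ = {0} if and only if R̃_T^b ∩ L^0_+ = {0}. -/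
open MeasureTheory Filter Finset
open scoped ENNReal NNReal

noncomputable section

open BidAskFTAP in
/-- `R̃_T ∩ L⁰₊ = {0}` holds if and only if `R̃_T^b ∩ L⁰₊ = {0}`, where
`R̃_T^b` uses only bounded strategies. -/
theorem stmt1 {Ω : Type*} [m : MeasurableSpace Ω] {d T : ℕ} (hT : 1 ≤ T)
    (P : MeasureTheory.Measure Ω) [MeasureTheory.IsProbabilityMeasure P]
    (hcomp : P.IsComplete)
    (F : ℕ → MeasurableSpace Ω) (hF : IsFiltration F T)
    (Shat Scheck : ℕ → Ω → Fin d → ℝ)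
    (hadapt1 : AdaptedProc F T Shat) (hadapt2 : AdaptedProc F T Scheck) :
    (∀ Hhat Hcheck : ℕ → Ω → Fin d → ℝ,
      IsStrategy F T Hhat → NonnegStrategy T Hhat →
      IsStrategy F T Hcheck → NonposStrategy T Hcheck →
      (∀ᵐ ω ∂P, 0 ≤ gain Shat T Hhat ω + gain Scheck T Hcheck ω) →
      (fun ω => gain Shat T Hhat ω + gain Scheck T Hcheck ω) =ᵐ[P] 0)
    ↔
    (∀ Hhat Hcheck : ℕ → Ω → Fin d → ℝ,
      IsStrategy F T Hhat → NonnegStrategy T Hhat → BoundedStrategy T Hhat →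
      IsStrategy F T Hcheck → NonposStrategy T Hcheck → BoundedStrategy T Hcheck →
      (∀ᵐ ω ∂P, 0 ≤ gain Shat T Hhat ω + gain Scheck T Hcheck ω) →
      (fun ω => gain Shat T Hhat ω + gain Scheck T Hcheck ω) =ᵐ[P] 0) := by
  classical
  constructor
  · intro h Hhat Hcheck h1 h2 _ h3 h4 _ hae
    exact h Hhat Hcheck h1 h2 h3 h4 hae
  · intro hb Hhat Hcheck hS1 hN1 hS2 hN2 hae
    by_contra hne
    -- cumulative gain process
    set V : ℕ → Ω → ℝ := fun s ω => ∑ j ∈ Icc 1 s,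
      (dotp (Hhat j ω) (Shat j ω - Shat (j-1) ω)
        + dotp (Hcheck j ω) (Scheck j ω - Scheck (j-1) ω)) with hVdef
    have hfV : (fun ω => gain Shat T Hhat ω + gain Scheck T Hcheck ω) = V T := by
      funext ω
      simp [gain, hVdef, Finset.sum_add_distrib]
    have haeV : ∀ᵐ ω ∂P, 0 ≤ V T ω := by
      filter_upwards [hae] with ω h
      rw [← congrFun hfV ω]; exact h
    have hneV : ¬ (V T =ᵐ[P] 0) := by rw [← hfV]; exact hne
    clear hae hne
    rename' haeV => hae, hneV => hne
    -- the predicate : V s is a.s. ≥ 0 but not a.s. 0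
    set Q : ℕ → Prop := fun s => (∀ᵐ ω ∂P, 0 ≤ V s ω) ∧ ¬ (V s =ᵐ[P] 0) with hQdef
    have hex : ∃ s, Q s := ⟨T, hae, hne⟩
    set t := Nat.find hex with htdef
    have ht : Q t := Nat.find_spec hex
    have hmin : ∀ s < t, ¬ Q s := fun s hs => Nat.find_min hex hs
    have htT : t ≤ T := Nat.find_le ⟨hae, hne⟩
    have ht1 : 1 ≤ t := by
      by_contra h0
      have ht0 : t = 0 := by omega
      have : ¬ Q 0 := by
        intro hQ0
        exact hQ0.2 (by
          have : V 0 = fun _ => 0 := by funext ω; simp [hVdef]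
          rw [this]; rfl)
      rw [ht0] at ht; exact this ht
    -- the one-period increment
    set g : Ω → ℝ := fun ω =>
      dotp (Hhat t ω) (Shat t ω - Shat (t-1) ω)
        + dotp (Hcheck t ω) (Scheck t ω - Scheck (t-1) ω) with hgdef
    have hincr : ∀ ω, V t ω = V (t-1) ω + g ω := by
      intro ω
      have h1 : t - 1 + 1 = t := by omega
      calc V t ω = V (t - 1 + 1) ω := by rw [h1]
        _ = V (t-1) ω + g ω := by
            simp only [hVdef]
            rw [Finset.sum_Icc_succ_top (by omega : 1 ≤ t - 1 + 1)]
            rw [hgdef]; rw [h1]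
    -- measurability of V (t-1) w.r.t. F (t-1)
    have hVmeas : Measurable[F (t-1)] (V (t-1)) := by
      apply Finset.measurable_sum
      intro j hj
      rw [Finset.mem_Icc] at hj
      have hj1 : 1 ≤ j := hj.1
      have hjt : j ≤ t - 1 := hj.2
      have hjT : j ≤ T := by omega
      have hHhat : Measurable[F (t-1)] (Hhat j) :=
        (hS1.2 j hj1 hjT).mono (hF.1 (by omega : j - 1 ≤ t - 1)) le_rfl
      have hHcheck : Measurable[F (t-1)] (Hcheck j) :=
        (hS2.2 j hj1 hjT).mono (hF.1 (by omega : j - 1 ≤ t - 1)) le_rfl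
      have hSh : ∀ u ≤ t - 1, Measurable[F (t-1)] (Shat u) := fun u hu =>
        (hadapt1 u (by omega)).mono (hF.1 hu) le_rfl
      have hSc : ∀ u ≤ t - 1, Measurable[F (t-1)] (Scheck u) := fun u hu =>
        (hadapt2 u (by omega)).mono (hF.1 hu) le_rfl
      apply Measurable.add
      · apply Finset.measurable_sum
        intro i _
        exact ((measurable_pi_apply i).comp hHhat).mul
          (((measurable_pi_apply i).comp (hSh j hjt)).sub
            ((measurable_pi_apply i).comp (hSh (j-1) (by omega))))
      · apply Finset.measurable_sum
        intro i _
        exact ((measurable_pi_apply i).comp hHcheck).mul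
          (((measurable_pi_apply i).comp (hSc j hjt)).sub
            ((measurable_pi_apply i).comp (hSc (j-1) (by omega))))
    -- normalization
    set D : Ω → ℝ := fun ω => ∑ i, (Hhat t ω i - Hcheck t ω i) with hDdef
    have hD0 : ∀ ω, 0 ≤ D ω := by
      intro ω
      apply Finset.sum_nonneg
      intro i _
      have := hN1 t htT ω i
      have := hN2 t htT ω i
      linarith
    have hDm : Measurable[F (t-1)] D := by
      apply Finset.measurable_sum
      intro i _
      exact ((measurable_pi_apply i).comp (hS1.2 t ht1 htT)).sub
        ((measurable_pi_apply i).comp (hS2.2 t ht1 htT))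
    set c : Ω → ℝ := fun ω => (1 + D ω)⁻¹ with hcdef
    have h1D : ∀ ω, 0 < 1 + D ω := fun ω => by linarith [hD0 ω]
    have hc_pos : ∀ ω, 0 < c ω := fun ω => inv_pos.2 (h1D ω)
    have hc1 : ∀ ω, c ω * (1 + D ω) = 1 := fun ω => inv_mul_cancel₀ (h1D ω).ne'
    have hcm : Measurable[F (t-1)] c := (measurable_const.add hDm).inv
    have hHleD : ∀ ω i, Hhat t ω i ≤ D ω ∧ -Hcheck t ω i ≤ D ω := by
      intro ω i
      have h1 := hN1 t htT ω i
      have h2 := hN2 t htT ω i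
      have hsum : Hhat t ω i - Hcheck t ω i ≤ D ω :=
        Finset.single_le_sum (f := fun i => Hhat t ω i - Hcheck t ω i)
          (fun j _ => by
            show (0:ℝ) ≤ Hhat t ω j - Hcheck t ω j
            linarith [hN1 t htT ω j, hN2 t htT ω j])
          (Finset.mem_univ i)
      constructor <;> linarith
    set χ : Ω → ℝ := fun ω => if V (t-1) ω ≤ 0 then (1:ℝ) else 0 with hχdef
    have hχm : Measurable[F (t-1)] χ := by
      apply Measurable.ite _ measurable_const measurable_const
      exact measurableSet_le hVmeas measurable_const
    have hχ01 : ∀ ω, χ ω = 0 ∨ χ ω = 1 := by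
      intro ω; simp only [hχdef]; split <;> simp
    -- the bounded strategies
    set Kh : ℕ → Ω → Fin d → ℝ :=
      fun s => if s = t then (fun ω i => χ ω * c ω * Hhat t ω i) else 0 with hKhdef
    set Kc : ℕ → Ω → Fin d → ℝ :=
      fun s => if s = t then (fun ω i => χ ω * c ω * Hcheck t ω i) else 0 with hKcdef
    have hKhs : IsStrategy F T Kh := by
      constructor
      · simp only [hKhdef]
        rw [if_neg (by omega)]
      · intro s hs1 hsT
        simp only [hKhdef]
        rcases eq_or_ne s t with h | h
        · rw [if_pos h, h]
          exact @measurable_pi_lambda Ω (Fin d) (fun _ => ℝ) (F (t-1)) _ _ fun i =>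
            (hχm.mul hcm).mul ((measurable_pi_apply i).comp (hS1.2 t ht1 htT))
        · rw [if_neg h]; exact measurable_const
    have hKcs : IsStrategy F T Kc := by
      constructor
      · simp only [hKcdef]
        rw [if_neg (by omega)]
      · intro s hs1 hsT
        simp only [hKcdef]
        rcases eq_or_ne s t with h | h
        · rw [if_pos h, h]
          exact @measurable_pi_lambda Ω (Fin d) (fun _ => ℝ) (F (t-1)) _ _ fun i =>
            (hχm.mul hcm).mul ((measurable_pi_apply i).comp (hS2.2 t ht1 htT))
        · rw [if_neg h]; exact measurable_const
    have hχnn : ∀ ω, 0 ≤ χ ω := by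
      intro ω; rcases hχ01 ω with h | h <;> rw [h] <;> norm_num
    have hKhn : NonnegStrategy T Kh := by
      intro s _ ω i
      simp only [hKhdef]
      split
      · exact mul_nonneg (mul_nonneg (hχnn ω) (hc_pos ω).le) (hN1 t htT ω i)
      · simp
    have hKcn : NonposStrategy T Kc := by
      intro s _ ω i
      simp only [hKcdef]
      split
      · exact mul_nonpos_of_nonneg_of_nonpos
          (mul_nonneg (hχnn ω) (hc_pos ω).le) (hN2 t htT ω i)
      · simp
    have hχle1 : ∀ ω, χ ω ≤ 1 := by
      intro ω; rcases hχ01 ω with h | h <;> rw [h] <;> norm_num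
    have hKhb : BoundedStrategy T Kh := by
      refine ⟨1, fun s _ ω i => ?_⟩
      simp only [hKhdef]
      split
      · have h1 := (hHleD ω i).1
        have h2 := hN1 t htT ω i
        have h3 := hc_pos ω
        have h4 := hc1 ω
        have h5 := hχnn ω
        have h6 := hχle1 ω
        rw [abs_of_nonneg (mul_nonneg (mul_nonneg h5 h3.le) h2)]
        have h7 : c ω * Hhat t ω i ≤ c ω * (1 + D ω) :=
          mul_le_mul_of_nonneg_left (by linarith) h3.le
        rw [hc1 ω] at h7
        rcases hχ01 ω with hχ | hχ <;> rw [hχ]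
        · simp
        · rw [one_mul]; exact h7
      · simp
    have hKcb : BoundedStrategy T Kc := by
      refine ⟨1, fun s _ ω i => ?_⟩
      simp only [hKcdef]
      split
      · have h1 := (hHleD ω i).2
        have h2 := hN2 t htT ω i
        have h3 := hc_pos ω
        have h4 := hc1 ω
        have h5 := hχnn ω
        have h6 := hχle1 ω
        rw [abs_of_nonpos (mul_nonpos_of_nonneg_of_nonpos (mul_nonneg h5 h3.le) h2)]
        have h7 : c ω * (-Hcheck t ω i) ≤ c ω * (1 + D ω) :=
          mul_le_mul_of_nonneg_left (by linarith) h3.le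
        rw [hc1 ω, mul_neg] at h7
        rcases hχ01 ω with hχ | hχ <;> rw [hχ]
        · simp
        · rw [one_mul]; linarith
      · simp
    -- gain of the bounded strategies
    have hgainK : ∀ ω, gain Shat T Kh ω + gain Scheck T Kc ω = χ ω * c ω * g ω := by
      intro ω
      have hmem : t ∈ Icc 1 T := Finset.mem_Icc.2 ⟨ht1, htT⟩
      have h1 : gain Shat T Kh ω
          = χ ω * c ω * dotp (Hhat t ω) (Shat t ω - Shat (t-1) ω) := by
        unfold gain
        rw [Finset.sum_eq_single_of_mem t hmem]
        · simp only [hKhdef, if_pos rfl, dotp, Finset.mul_sum]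
          congr 1; funext i; ring
        · intro j _ hjt
          simp [hKhdef, if_neg hjt, dotp]
      have h2 : gain Scheck T Kc ω
          = χ ω * c ω * dotp (Hcheck t ω) (Scheck t ω - Scheck (t-1) ω) := by
        unfold gain
        rw [Finset.sum_eq_single_of_mem t hmem]
        · simp only [hKcdef, if_pos rfl, dotp, Finset.mul_sum]
          congr 1; funext i; ring
        · intro j _ hjt
          simp [hKcdef, if_neg hjt, dotp]
      rw [h1, h2, hgdef]; ring
    -- the bounded gain is a.s. nonnegative
    have haeK : ∀ᵐ ω ∂P, 0 ≤ gain Shat T Kh ω + gain Scheck T Kc ω := by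
      filter_upwards [ht.1] with ω hVt
      rw [hgainK ω]
      rcases hχ01 ω with h | h
      · rw [h]; simp
      · rw [h]
        have hg0 : 0 ≤ g ω := by
          have hχ1 : V (t-1) ω ≤ 0 := by
            by_contra hlt
            simp only [hχdef, if_neg hlt] at h
            norm_num at h
          have := hincr ω
          linarith
        have := hc_pos ω
        nlinarith
    -- apply the bounded no-arbitrage hypothesis
    have hzero := hb Kh Kc hKhs hKhn hKhb hKcs hKcn hKcb haeK
    have hzero' : ∀ᵐ ω ∂P, χ ω * c ω * g ω = 0 := by
      filter_upwards [hzero] with ω h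
      rw [← hgainK ω]; exact h
    -- conclude
    by_cases hpos : ∀ᵐ ω ∂P, 0 ≤ V (t-1) ω
    · -- then V (t-1) = 0 a.s., hence V t = 0 a.s., contradicting Q t
      have hnQ : ¬ Q (t-1) := hmin (t-1) (by omega)
      have hV0 : V (t-1) =ᵐ[P] 0 := by
        by_contra hne'
        exact hnQ ⟨hpos, hne'⟩
      have : V t =ᵐ[P] 0 := by
        filter_upwards [hV0, hzero'] with ω h0 hz
        have hχ1 : χ ω = 1 := by
          simp only [hχdef, if_pos (le_of_eq (show V (t-1) ω = 0 from h0))]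
        rw [hχ1, one_mul] at hz
        have hg0 : g ω = 0 := by
          rcases mul_eq_zero.1 hz with h | h
          · exact absurd h (hc_pos ω).ne'
          · exact h
        have := hincr ω
        simp only [Pi.zero_apply] at h0 ⊢
        rw [this, h0, hg0, add_zero]
      exact ht.2 this
    · -- P(V(t-1) < 0) > 0, but a.s. V(t-1) < 0 is impossible
      have hset : P {ω | V (t-1) ω < 0} ≠ 0 := by
        intro h0
        apply hpos
        rw [ae_iff]
        convert h0 using 2
        ext ω; simp [not_le]
      apply hset
      rw [MeasureTheory.measure_eq_zero_iff_ae_notMem]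
      filter_upwards [ht.1, hzero'] with ω hVt hz
      intro hlt
      replace hlt : V (t-1) ω < 0 := hlt
      have hχ1 : χ ω = 1 := by simp only [hχdef, if_pos hlt.le]
      rw [hχ1, one_mul] at hz
      have hg0 : g ω = 0 := by
        rcases mul_eq_zero.1 hz with h | h
        · exact absurd h (hc_pos ω).ne'
        · exact h
      have := hincr ω
      linarith
end
end

section
/- If the no-arbitrage condition 𝒜_T ∩ L^0_+ = {0} holds for the time horizon T, then there is no arbitrage in the market with any time horizon 1 ≤ t ≤ T, i.e. 𝒜_t ∩ L^0_+(𝓕_t) = {0} for every t = 1, …, T. -/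
open MeasureTheory Filter Finset
open scoped ENNReal NNReal

noncomputable section

namespace BidAskFTAP

variable {Ω : Type*}

section Market

variable [m : MeasurableSpace Ω] {d : ℕ}

@[simp] lemma posPart_zero : posPart (0 : Fin d → ℝ) = 0 := by
  funext i; simp [posPart]

@[simp] lemma negPart_zero : negPart (0 : Fin d → ℝ) = 0 := by
  funext i; simp [negPart]

@[simp] lemma dotp_zero_left (y : Fin d → ℝ) : dotp (0 : Fin d → ℝ) y = 0 := by
  simp [dotp]

lemma posPart_neg (x : Fin d → ℝ) : posPart (-x) = negPart x := by
  funext i; simp [posPart, negPart]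

lemma negPart_neg (x : Fin d → ℝ) : negPart (-x) = posPart x := by
  funext i; simp [posPart, negPart]

lemma xval_extend (Sb Sa : ℕ → Ω → Fin d → ℝ) {t T : ℕ} (ht : 1 ≤ t) (htT : t ≤ T)
    (H : ℕ → Ω → Fin d → ℝ) (ω : Ω) :
    xval Sb Sa T (fun j => if j ≤ t then H j else 0) ω = xval Sb Sa t H ω := by
  unfold xval
  beta_reduce
  rcases eq_or_lt_of_le htT with rfl | hlt
  · simp only [le_refl, if_true]
    congr 2
    refine Finset.sum_congr rfl fun j hj => ?_
    rw [Finset.mem_Icc] at hj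
    rw [if_pos hj.2, if_pos (le_trans (Nat.sub_le j 1) hj.2)]
  · have hT0 : ¬ (T ≤ t) := not_le.mpr hlt
    rw [if_neg hT0]
    have hIcc : ∀ u : ℕ, Finset.Icc 1 u = Finset.Ioc 0 u := fun u => by
      rw [← Finset.Icc_add_one_left_eq_Ioc, zero_add]
    rw [hIcc T, hIcc t, ← Finset.sum_Ioc_consecutive _ (Nat.zero_le t) htT]
    have hsum1 : ∀ j ∈ Finset.Ioc 0 t,
        (dotp (negPart ((if j ≤ t then H j else 0) ω - (if j - 1 ≤ t then H (j-1) else 0) ω)) (Sb (j - 1) ω)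
          - dotp (posPart ((if j ≤ t then H j else 0) ω - (if j - 1 ≤ t then H (j-1) else 0) ω)) (Sa (j - 1) ω))
        = (dotp (negPart (H j ω - H (j - 1) ω)) (Sb (j - 1) ω)
          - dotp (posPart (H j ω - H (j - 1) ω)) (Sa (j - 1) ω)) := by
      intro j hj
      rw [Finset.mem_Ioc] at hj
      rw [if_pos hj.2, if_pos (le_trans (Nat.sub_le j 1) hj.2)]
    have hsum2 : (∑ j ∈ Finset.Ioc t T,
        (dotp (negPart ((if j ≤ t then H j else 0) ω - (if j - 1 ≤ t then H (j-1) else 0) ω)) (Sb (j - 1) ω)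
          - dotp (posPart ((if j ≤ t then H j else 0) ω - (if j - 1 ≤ t then H (j-1) else 0) ω)) (Sa (j - 1) ω)))
        = dotp (posPart (H t ω)) (Sb t ω) - dotp (negPart (H t ω)) (Sa t ω) := by
      rw [Finset.sum_eq_single_of_mem (t + 1)
        (Finset.mem_Ioc.mpr ⟨Nat.lt_succ_self t, hlt⟩)]
      · have h1 : ¬ (t + 1 ≤ t) := by omega
        have h2 : t + 1 - 1 = t := by omega
        rw [if_neg h1, h2, if_pos le_rfl]
        simp only [Pi.zero_apply, zero_sub]
        rw [negPart_neg, posPart_neg]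
      · intro j hj hne
        rw [Finset.mem_Ioc] at hj
        have h1 : ¬ (j ≤ t) := by omega
        have h2 : ¬ (j - 1 ≤ t) := by omega
        rw [if_neg h1, if_neg h2]
        simp
    rw [Finset.sum_congr rfl hsum1, hsum2]
    simp
    ring


end Market

end BidAskFTAP
open BidAskFTAP in
/-- If the no-arbitrage condition `𝒜_T ∩ L⁰₊ = {0}` holds for horizon `T`,
then `𝒜_t ∩ L⁰₊(𝓕_t) = {0}` for every `1 ≤ t ≤ T`. -/
theorem stmt2 {Ω : Type*} [m : MeasurableSpace Ω] {d T : ℕ} (hT : 1 ≤ T)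
    (P : MeasureTheory.Measure Ω) [MeasureTheory.IsProbabilityMeasure P]
    (hcomp : P.IsComplete)
    (F : ℕ → MeasurableSpace Ω) (hF : IsFiltration F T)
    (Sb Sa : ℕ → Ω → Fin d → ℝ) (hBA : IsBidAsk P F T Sb Sa)
    (hNA : NA P F Sb Sa T) :
    ∀ t, 1 ≤ t → t ≤ T → NA P F Sb Sa t := by
  intro t ht htT f hf hnn
  obtain ⟨H, ⟨hH0, hHmeas⟩, r, hrmeas, hrnn, hfeq⟩ := hf
  have hmem : memA P F Sb Sa T f := by
    refine ⟨fun j => if j ≤ t then H j else 0, ⟨?_, ?_⟩, r,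
      hrmeas.mono (hF.1 htT) le_rfl, hrnn, ?_⟩
    · simp only [Nat.zero_le, if_pos]
      exact hH0
    · intro s hs1 hsT
      by_cases h : s ≤ t
      · simpa only [if_pos h] using hHmeas s hs1 h
      · have : ((fun j => if j ≤ t then H j else 0) s : Ω → Fin d → ℝ) = 0 := by
          simp only [if_neg h]
        rw [this]
        exact @measurable_const _ _ _ (F (s - 1)) 0
    · refine hfeq.trans (Eventually.of_forall fun ω => ?_)
      simp only
      rw [xval_extend Sb Sa ht htT H ω]
  exact hNA f hmem hnn
end
end

section
/- For every t = 1, …, T the inclusion F_t ⊆ 𝒜_t holds, i.e. every element of F_t can be written as x_t(H) minus an a.s. nonnegative 𝓕_t-measurable random variable for some strategy H ∈ 𝒫_t. -/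
open MeasureTheory Filter Finset
open scoped ENNReal NNReal

noncomputable section

section Helpers

open BidAskFTAP

lemma dotp_sub_right' {d : ℕ} (x u v : Fin d → ℝ) :
    dotp x (u - v) = dotp x u - dotp x v := by
  simp [dotp, mul_sub, Finset.sum_sub_distrib]

lemma dotp_sum_left' {d : ℕ} {ι : Type*} (s : Finset ι) (g : ι → Fin d → ℝ)
    (y : Fin d → ℝ) : dotp (∑ j ∈ s, g j) y = ∑ j ∈ s, dotp (g j) y := by
  unfold dotp
  simp only [Finset.sum_apply, Finset.sum_mul]
  exact Finset.sum_comm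

lemma step_id' {d : ℕ} (a b s1 s2 : Fin d → ℝ) :
    dotp (BidAskFTAP.negPart (a - b)) s1 - dotp (BidAskFTAP.posPart (a - b)) s2
      = dotp b s1 - dotp a s2 + dotp (fun i => min (a i) (b i)) (s2 - s1) := by
  simp only [dotp, BidAskFTAP.negPart, BidAskFTAP.posPart, Pi.sub_apply, ← Finset.sum_sub_distrib,
    ← Finset.sum_add_distrib]
  refine Finset.sum_congr rfl fun i _ => ?_
  rcases le_total (a i) (b i) with h | h
  · rw [max_eq_left (by linarith), max_eq_right (by linarith), min_eq_left h]; ring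
  · rw [max_eq_right (by linarith), max_eq_left (by linarith), min_eq_right h]; ring

lemma liq_id' {d : ℕ} (a b sb sa : Fin d → ℝ) :
    dotp (BidAskFTAP.posPart (a - b)) sb - dotp (BidAskFTAP.negPart (a - b)) sa
      = dotp a sb - dotp b sa + dotp (fun i => min (a i) (b i)) (sa - sb) := by
  simp only [dotp, BidAskFTAP.negPart, BidAskFTAP.posPart, Pi.sub_apply, ← Finset.sum_sub_distrib,
    ← Finset.sum_add_distrib]
  refine Finset.sum_congr rfl fun i _ => ?_
  rcases le_total (a i) (b i) with h | h
  · rw [max_eq_right (by linarith), max_eq_left (by linarith), min_eq_left h]; ring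
  · rw [max_eq_left (by linarith), max_eq_right (by linarith), min_eq_right h]; ring

end Helpers

open BidAskFTAP in
/-- For every `t = 1, …, T` the inclusion `F_t ⊆ 𝒜_t` holds: every element
of `F_t` can be written as `x_t(H) - r` with `H ∈ 𝒫_t` a strategy and `r ∈ L⁰₊(𝓕_t)`. -/
theorem stmt4 {Ω : Type*} [m : MeasurableSpace Ω] {d T : ℕ} (hT : 1 ≤ T)
    (P : MeasureTheory.Measure Ω) [MeasureTheory.IsProbabilityMeasure P]
    (hcomp : P.IsComplete)
    (F : ℕ → MeasurableSpace Ω) (hF : IsFiltration F T)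
    (Sb Sa : ℕ → Ω → Fin d → ℝ) (hBA : IsBidAsk P F T Sb Sa) :
    ∀ t, 1 ≤ t → t ≤ T → ∀ f : Ω → ℝ, memFt P F Sb Sa t f → memA P F Sb Sa t f := by
  classical
  intro t ht1 htT f hf
  obtain ⟨Hp, Hm, r, hmeas, hnn, hrmeas, hrnn, hfeq⟩ := hf
  set H : ℕ → Ω → Fin d → ℝ := fun s ω => ∑ j ∈ Finset.range s, (Hp j ω - Hm j ω)
    with hHdef
  set rex : Ω → ℝ := fun ω =>
    (∑ j ∈ Finset.range t,
        dotp (fun i => min (Hp j ω i) (Hm j ω i)) (Sa j ω - Sb j ω))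
      + dotp (fun i => min ((∑ j ∈ Finset.range t, Hp j ω) i)
          ((∑ j ∈ Finset.range t, Hm j ω) i)) (Sa t ω - Sb t ω) with hrexdef
  -- key pointwise identity
  have hkey : ∀ ω, xval Sb Sa t H ω
      = (∑ j ∈ Finset.range t,
          (dotp (Hp j ω) (Sb t ω - Sa j ω) - dotp (Hm j ω) (Sa t ω - Sb j ω)))
        + rex ω := by
    intro ω
    have h1 : ∀ i : ℕ, 1 + i - 1 = i := fun i => by omega
    have hΔ : ∀ i : ℕ, H (1 + i) ω - H i ω = Hp i ω - Hm i ω := by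
      intro i
      show (∑ j ∈ Finset.range (1 + i), (Hp j ω - Hm j ω))
          - ∑ j ∈ Finset.range i, (Hp j ω - Hm j ω) = _
      rw [Nat.add_comm, Finset.sum_range_succ, add_sub_cancel_left]
    have hHt : H t ω
        = (∑ j ∈ Finset.range t, Hp j ω) - (∑ j ∈ Finset.range t, Hm j ω) := by
      simp [hHdef, Finset.sum_sub_distrib]
    unfold xval
    rw [← Finset.Ico_add_one_right_eq_Icc, Finset.sum_Ico_eq_sum_range]
    simp only [Nat.succ_sub_one, Nat.add_sub_cancel, h1]
    have hsum1 : (∑ i ∈ Finset.range t,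
        (dotp (BidAskFTAP.negPart (H (1 + i) ω - H i ω)) (Sb i ω)
          - dotp (BidAskFTAP.posPart (H (1 + i) ω - H i ω)) (Sa i ω)))
        = ∑ i ∈ Finset.range t,
          (dotp (Hm i ω) (Sb i ω) - dotp (Hp i ω) (Sa i ω)
            + dotp (fun k => min (Hp i ω k) (Hm i ω k)) (Sa i ω - Sb i ω)) := by
      refine Finset.sum_congr rfl fun i _ => ?_
      rw [hΔ i, step_id']
    rw [hsum1, hHt, show (∑ j ∈ Finset.range t, Hp j ω)
        - (∑ j ∈ Finset.range t, Hm j ω)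
        = (∑ j ∈ Finset.range t, Hp j ω) - (∑ j ∈ Finset.range t, Hm j ω) from rfl]
    have hliq := liq_id' (∑ j ∈ Finset.range t, Hp j ω)
      (∑ j ∈ Finset.range t, Hm j ω) (Sb t ω) (Sa t ω)
    rw [hrexdef]
    simp only [dotp_sub_right', dotp_sum_left', Finset.sum_add_distrib,
      Finset.sum_sub_distrib] at hliq ⊢
    linarith [hliq]
  -- measurability facts
  have hrexmeas : Measurable[F t] rex := by
    have hterm : ∀ j ∈ Finset.range t, Measurable[F t]
        (fun ω => dotp (fun i => min (Hp j ω i) (Hm j ω i)) (Sa j ω - Sb j ω)) := by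
      intro j hj
      rw [Finset.mem_range] at hj
      have h1 : Measurable[F t] (Hp j) := ((hmeas j hj).1).mono (hF.1 hj.le) le_rfl
      have h2 : Measurable[F t] (Hm j) := ((hmeas j hj).2).mono (hF.1 hj.le) le_rfl
      have h3 : Measurable[F t] (Sb j) :=
        (hBA.1 j (hj.le.trans htT)).mono (hF.1 hj.le) le_rfl
      have h4 : Measurable[F t] (Sa j) :=
        (hBA.2.1 j (hj.le.trans htT)).mono (hF.1 hj.le) le_rfl
      unfold dotp
      apply Finset.measurable_sum
      intro i _
      simp only [Pi.sub_apply]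
      exact (((measurable_pi_apply i).comp h1).min
          ((measurable_pi_apply i).comp h2)).mul
        (((measurable_pi_apply i).comp h4).sub ((measurable_pi_apply i).comp h3))
    have hA : ∀ i : Fin d, Measurable[F t]
        (fun ω => (∑ j ∈ Finset.range t, Hp j ω) i) := by
      intro i
      simp only [Finset.sum_apply]
      apply Finset.measurable_sum
      intro j hj
      rw [Finset.mem_range] at hj
      exact (measurable_pi_apply i).comp (((hmeas j hj).1).mono (hF.1 hj.le) le_rfl)
    have hB : ∀ i : Fin d, Measurable[F t]
        (fun ω => (∑ j ∈ Finset.range t, Hm j ω) i) := by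
      intro i
      simp only [Finset.sum_apply]
      apply Finset.measurable_sum
      intro j hj
      rw [Finset.mem_range] at hj
      exact (measurable_pi_apply i).comp (((hmeas j hj).2).mono (hF.1 hj.le) le_rfl)
    have h3 : Measurable[F t] (Sb t) := by
      have := hBA.1 t htT; exact this
    have h4 : Measurable[F t] (Sa t) := by
      have := hBA.2.1 t htT; exact this
    rw [hrexdef]
    refine Measurable.add (Finset.measurable_sum _ hterm) ?_
    unfold dotp
    apply Finset.measurable_sum
    intro i _
    simp only [Pi.sub_apply]
    exact ((hA i).min (hB i)).mul
      (((measurable_pi_apply i).comp h4).sub ((measurable_pi_apply i).comp h3))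
  -- a.e. nonnegativity of rex
  have hba : ∀ᵐ ω ∂P, ∀ j : ℕ, ∀ i : Fin d, j ≤ t → Sb j ω i ≤ Sa j ω i := by
    rw [ae_all_iff]
    intro j
    rw [ae_all_iff]
    intro i
    by_cases hj : j ≤ t
    · exact (hBA.2.2.2.2 j (hj.trans htT) i).mono fun ω h _ => h
    · exact ae_of_all _ fun ω h => absurd h hj
  have hrexnn : ∀ᵐ ω ∂P, 0 ≤ rex ω := by
    filter_upwards [hba] with ω hω
    rw [hrexdef]
    have hterm : ∀ j ∈ Finset.range t,
        0 ≤ dotp (fun i => min (Hp j ω i) (Hm j ω i)) (Sa j ω - Sb j ω) := by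
      intro j hj
      rw [Finset.mem_range] at hj
      apply Finset.sum_nonneg
      intro i _
      have h0 : 0 ≤ min (Hp j ω i) (Hm j ω i) :=
        le_min (hnn j hj ω i).1 (hnn j hj ω i).2
      have h1 : 0 ≤ (Sa j ω - Sb j ω) i := by
        simp only [Pi.sub_apply]; linarith [hω j i hj.le]
      exact mul_nonneg h0 h1
    have h2 : 0 ≤ dotp (fun i => min ((∑ j ∈ Finset.range t, Hp j ω) i)
        ((∑ j ∈ Finset.range t, Hm j ω) i)) (Sa t ω - Sb t ω) := by
      apply Finset.sum_nonneg
      intro i _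
      have hA : 0 ≤ (∑ j ∈ Finset.range t, Hp j ω) i := by
        simp only [Finset.sum_apply]
        exact Finset.sum_nonneg fun j hj =>
          (hnn j (Finset.mem_range.mp hj) ω i).1
      have hB : 0 ≤ (∑ j ∈ Finset.range t, Hm j ω) i := by
        simp only [Finset.sum_apply]
        exact Finset.sum_nonneg fun j hj =>
          (hnn j (Finset.mem_range.mp hj) ω i).2
      have h1 : 0 ≤ (Sa t ω - Sb t ω) i := by
        simp only [Pi.sub_apply]; linarith [hω t i le_rfl]
      exact mul_nonneg (le_min hA hB) h1
    exact add_nonneg (Finset.sum_nonneg hterm) h2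
  -- assemble
  refine ⟨H, ⟨?_, ?_⟩, fun ω => r ω + rex ω, hrmeas.add hrexmeas, ?_, ?_⟩
  · funext ω
    simp [hHdef]
  · intro s hs1 hst
    rw [hHdef]
    apply Finset.measurable_sum
    intro j hj
    rw [Finset.mem_range] at hj
    have hjs : j ≤ s - 1 := by omega
    exact (((hmeas j (by omega)).1).sub ((hmeas j (by omega)).2)).mono
      (hF.1 hjs) le_rfl
  · filter_upwards [hrnn, hrexnn] with ω h1 h2
    linarith
  · filter_upwards [hfeq] with ω hω
    rw [hω, hkey ω]
    ring
end
end
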